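/- Let α > 0 and x be real numbers, and let k be a positive integer with k + x > 0. Suppose (r_n)_{n≥k} is a sequence of positive real numbers satisfying r_{n+1} = r_n·(1 + α/(n+x)) for all n ≥ k. Then the limit lim_{n→∞} r_n/n^α exists and is a strictly positive real number. -/

import Mathlib

open Filter Topology

private lemma log_approx {u : ℝ} (hu : 0 ≤ u) : |Real.log (1+u) - u| ≤ u^2 := by
  have hpos : (0:ℝ) < 1 + u := by linarith
  have h1 : Real.log (1+u) ≤ u := by
    have := Real.log_le_sub_one_of_pos hpos
    linarith
  have h2 : u/(1+u) ≤ Real.log (1+u) := by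
    have h := Real.log_le_sub_one_of_pos (x := (1+u)⁻¹) (by positivity)
    rw [Real.log_inv] at h
    have h3 : 1 - (1+u)⁻¹ ≤ Real.log (1+u) := by linarith
    have h4 : u/(1+u) = 1 - (1+u)⁻¹ := by field_simp; ring
    linarith
  have h2' : u - u^2 ≤ u/(1+u) := by
    rw [le_div_iff₀ hpos]; nlinarith
  rw [abs_le]
  constructor <;> nlinarith

theorem stmt9 (α x : ℝ) (hα : 0 < α) (k : ℕ) (hk : 0 < k)
    (hkx : 0 < (k : ℝ) + x)
    (r : ℕ → ℝ) (hrpos : ∀ n, k ≤ n → 0 < r n)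
    (hrec : ∀ n, k ≤ n → r (n + 1) = r n * (1 + α / ((n : ℝ) + x))) :
    ∃ l : ℝ, 0 < l ∧
      Tendsto (fun n : ℕ => r n / (n : ℝ) ^ α) atTop (𝓝 l) := by
  have hk1 : (1:ℝ) ≤ (k:ℝ) := by exact_mod_cast hk
  set m : ℝ := min ((k:ℝ) + x) 1 with hmdef
  have hm : 0 < m := lt_min hkx one_pos
  have hnx : ∀ i : ℕ, (0:ℝ) < (k:ℝ) + i + x := by
    intro i
    have : (0:ℝ) ≤ i := Nat.cast_nonneg i
    linarith
  have hmi : ∀ i : ℕ, m * ((i:ℝ)+1) ≤ (k:ℝ) + i + x := by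
    intro i
    have hi : (0:ℝ) ≤ i := Nat.cast_nonneg i
    rcases le_total ((k:ℝ)+x) 1 with h | h
    · have hme : m = (k:ℝ)+x := min_eq_left h
      rw [hme]; nlinarith
    · have hme : m = 1 := min_eq_right h
      rw [hme]; nlinarith
  have hki : ∀ i : ℕ, (i:ℝ)+1 ≤ (k:ℝ)+i := by
    intro i; have : (0:ℝ) ≤ i := Nat.cast_nonneg i; linarith
  -- the increment sequence
  set d : ℕ → ℝ := fun i =>
    Real.log (1 + α/((k:ℝ)+i+x)) - α * Real.log (1 + 1/((k:ℝ)+i)) with hddef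
  set C : ℝ := α^2/m^2 + α + α*|x|/m with hCdef
  have hbound : ∀ i : ℕ, |d i| ≤ C * (1/((i:ℝ)+1)^2) := by
    intro i
    have hi1 : (0:ℝ) < (i:ℝ)+1 := by positivity
    set n : ℝ := (k:ℝ)+i with hn
    have hn0 : 0 < n := by have := hki i; linarith
    have hnx' : 0 < n + x := by have := hnx i; rw [hn]; ring_nf; ring_nf at this; linarith
    have hu0 : 0 ≤ α/(n+x) := by positivity
    have hv0 : 0 ≤ 1/n := by positivity
    have e1 : |Real.log (1 + α/(n+x)) - α/(n+x)| ≤ (α/(n+x))^2 := log_approx hu0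
    have e2 : |Real.log (1 + 1/n) - 1/n| ≤ (1/n)^2 := log_approx hv0
    have hdd : d i = (Real.log (1 + α/(n+x)) - α/(n+x))
        - α * (Real.log (1 + 1/n) - 1/n) + (α/(n+x) - α * (1/n)) := by
      rw [hddef, hn]; push_cast; ring_nf
    have e3 : |α/(n+x) - α*(1/n)| = α*|x|/(n*(n+x)) := by
      have : α/(n+x) - α*(1/n) = α*(-x)/(n*(n+x)) := by field_simp; ring
      rw [this, abs_div, abs_mul, abs_neg, abs_of_pos hα,
        abs_of_pos (mul_pos hn0 hnx')]
    have key : |d i| ≤ (α/(n+x))^2 + α*(1/n)^2 + α*|x|/(n*(n+x)) := by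
      rw [hdd]
      calc |(Real.log (1 + α/(n+x)) - α/(n+x))
        - α * (Real.log (1 + 1/n) - 1/n) + (α/(n+x) - α * (1/n))|
          ≤ |Real.log (1 + α/(n+x)) - α/(n+x)|
            + α * |Real.log (1 + 1/n) - 1/n| + |α/(n+x) - α*(1/n)| := by
            have := abs_mul α (Real.log (1 + 1/n) - 1/n)
            have h5 := abs_add_le ((Real.log (1 + α/(n+x)) - α/(n+x))
              - α * (Real.log (1 + 1/n) - 1/n)) (α/(n+x) - α * (1/n))
            have h6 := abs_sub (Real.log (1 + α/(n+x)) - α/(n+x))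
              (α * (Real.log (1 + 1/n) - 1/n))
            rw [abs_mul, abs_of_pos hα] at h6
            linarith
        _ ≤ _ := by
            rw [e3]
            have := mul_le_mul_of_nonneg_left e2 hα.le
            linarith
    -- now bound each term by C/(i+1)^2 pieces
    have hmi' := hmi i
    have hmi2 : m * ((i:ℝ)+1) ≤ n + x := by rw [hn]; ring_nf; ring_nf at hmi'; linarith
    have hb1 : (α/(n+x))^2 ≤ α^2/m^2 * (1/((i:ℝ)+1)^2) := by
      have h7 : α/(n+x) ≤ α/(m*((i:ℝ)+1)) := by
        apply div_le_div_of_nonneg_left hα.le (by positivity) hmi2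
      calc (α/(n+x))^2 ≤ (α/(m*((i:ℝ)+1)))^2 := by
            apply pow_le_pow_left₀ hu0 h7
        _ = α^2/m^2 * (1/((i:ℝ)+1)^2) := by field_simp
    have hb2 : α*(1/n)^2 ≤ α * (1/((i:ℝ)+1)^2) := by
      apply mul_le_mul_of_nonneg_left _ hα.le
      have h8 : 1/n ≤ 1/((i:ℝ)+1) := by
        apply div_le_div_of_nonneg_left one_pos.le hi1 (hki i)
      calc (1/n)^2 ≤ (1/((i:ℝ)+1))^2 := pow_le_pow_left₀ hv0 h8 2
        _ = 1/((i:ℝ)+1)^2 := by rw [div_pow, one_pow]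
    have hb3 : α*|x|/(n*(n+x)) ≤ α*|x|/m * (1/((i:ℝ)+1)^2) := by
      have h9 : m * ((i:ℝ)+1)^2 ≤ n*(n+x) := by
        have : ((i:ℝ)+1) * (m * ((i:ℝ)+1)) ≤ n * (n+x) := by
          apply mul_le_mul (hki i) hmi2 (by positivity) hn0.le
        nlinarith
      calc α*|x|/(n*(n+x)) ≤ α*|x|/(m * ((i:ℝ)+1)^2) := by
            apply div_le_div_of_nonneg_left (by positivity) (by positivity) h9
        _ = α*|x|/m * (1/((i:ℝ)+1)^2) := by field_simp
    calc |d i| ≤ (α/(n+x))^2 + α*(1/n)^2 + α*|x|/(n*(n+x)) := key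
      _ ≤ α^2/m^2 * (1/((i:ℝ)+1)^2) + α * (1/((i:ℝ)+1)^2)
          + α*|x|/m * (1/((i:ℝ)+1)^2) := by linarith
      _ = C * (1/((i:ℝ)+1)^2) := by rw [hCdef]; ring
  -- summability
  have hsum2 : Summable (fun i : ℕ => C * (1/((i:ℝ)+1)^2)) := by
    apply Summable.mul_left
    have h := (summable_nat_add_iff (f := fun n : ℕ => 1/(n:ℝ)^2) 1).mpr
      (by simpa using Real.summable_one_div_nat_pow.mpr one_lt_two)
    convert h using 2 with i
    · rfl
    push_cast
    ring_nf
  have hdabs : Summable (fun i => |d i|) :=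
    Summable.of_nonneg_of_le (fun i => abs_nonneg _) hbound hsum2
  have hdsum : Summable d := hdabs.of_abs
  -- telescoping
  set f : ℕ → ℝ := fun n => Real.log (r n) - α * Real.log n with hfdef
  have hstep : ∀ i : ℕ, f (k + i + 1) = f (k + i) + d i := by
    intro i
    have hle : k ≤ k + i := Nat.le_add_right k i
    have hcast : ((k + i : ℕ) : ℝ) = (k:ℝ) + i := by push_cast; ring
    have hpos1 : 0 < (k:ℝ) + i := lt_of_lt_of_le (by positivity) (hki i)
    have hpos2 : 0 < 1 + α/((k:ℝ)+i+x) := by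
      have := hnx i; positivity
    have hrr := hrec (k+i) hle
    rw [hcast] at hrr
    have hlog1 : Real.log (r (k+i+1))
        = Real.log (r (k+i)) + Real.log (1 + α/((k:ℝ)+i+x)) := by
      rw [hrr, Real.log_mul (ne_of_gt (hrpos _ hle)) (ne_of_gt hpos2)]
    have hfact : ((k:ℝ)+i) * (1 + 1/((k:ℝ)+i)) = (k:ℝ)+i+1 := by
      field_simp
    have hpos3 : 0 < 1 + 1/((k:ℝ)+i) := by positivity
    have hlog2 : Real.log ((k:ℝ)+i+1)
        = Real.log ((k:ℝ)+i) + Real.log (1 + 1/((k:ℝ)+i)) := by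
      rw [← hfact, Real.log_mul (ne_of_gt hpos1) (ne_of_gt hpos3)]
    have hcast2 : ((k + i + 1 : ℕ) : ℝ) = (k:ℝ) + i + 1 := by push_cast; ring
    rw [hfdef]
    simp only [hcast, hcast2, hlog1, hlog2, hddef]
    ring
  have htel : ∀ n : ℕ, f (k + n) = f k + ∑ i ∈ Finset.range n, d i := by
    intro n
    induction n with
    | zero => simp
    | succ n ih =>
      rw [Finset.sum_range_succ, ← Nat.add_assoc, hstep n, ih]
      ring
  -- convergence of f (k + n)
  obtain ⟨S, hS⟩ := hdsum
  have hSt : Tendsto (fun n => ∑ i ∈ Finset.range n, d i) atTop (𝓝 S) :=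
    hS.tendsto_sum_nat
  have hft : Tendsto (fun n => f (k + n)) atTop (𝓝 (f k + S)) := by
    simp only [htel]
    exact tendsto_const_nhds.add hSt
  refine ⟨Real.exp (f k + S), Real.exp_pos _, ?_⟩
  have hexp : Tendsto (fun n => Real.exp (f (k + n))) atTop
      (𝓝 (Real.exp (f k + S))) := (Real.continuous_exp.tendsto _).comp hft
  have heq : ∀ n : ℕ, Real.exp (f (k + n))
      = r (k + n) / ((k + n : ℕ) : ℝ) ^ α := by
    intro n
    have hle : k ≤ k + n := Nat.le_add_right k n
    have hcast : ((k + n : ℕ) : ℝ) = (k:ℝ) + n := by push_cast; ring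
    have hpos1 : (0:ℝ) < ((k + n : ℕ) : ℝ) := by
      rw [hcast]; exact lt_of_lt_of_le (by positivity) (hki n)
    rw [hfdef]
    simp only
    rw [Real.exp_sub, Real.exp_log (hrpos _ hle),
      Real.rpow_def_of_pos hpos1, mul_comm]
  have hexp2 : Tendsto (fun n => r (k + n) / ((k + n : ℕ) : ℝ) ^ α) atTop
      (𝓝 (Real.exp (f k + S))) := by
    simpa only [heq] using hexp
  have hexp3 : Tendsto (fun n => r (n + k) / ((n + k : ℕ) : ℝ) ^ α) atTop
      (𝓝 (Real.exp (f k + S))) := by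
    simpa only [Nat.add_comm] using hexp2
  exact (tendsto_add_atTop_iff_nat k).mp hexp3
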